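/- Let K be a number field of degree n over ℚ with no intermediate fields strictly between ℚ and K. Let π : O_K* ⋊ Gal(K/ℚ) → GL(n,ℤ) be the representation defined by the action on a ℤ-basis of O_K, and let G₀ be its image. If u, w ∈ O_K* \ {±1}, g ∈ GL(n,ℤ) and g π(u) g⁻¹ = π(w), then g ∈ G₀. Consequently g G₀ g⁻¹ ∩ G₀ is finite for every g ∈ GL(n,ℤ) \ G₀. -/

import Mathlib

open NumberField

/-- The integer matrix representing multiplication by the unit `u` composed with
the ring automorphism `σ` of `𝓞 K`, with respect to the `ℤ`-basis `b`:
`(piRep b u σ) · ω = u · ω^σ`. -/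
noncomputable def piRep {K : Type*} [Field K] {n : ℕ}
    (b : Module.Basis (Fin n) ℤ (𝓞 K)) (u : (𝓞 K)ˣ) (σ : 𝓞 K ≃+* 𝓞 K) :
    Matrix (Fin n) (Fin n) ℤ :=
  Matrix.of fun i j => b.repr ((u : 𝓞 K) * σ (b i)) j

/-- The image `G₀` of `O_K* ⋊ Gal(K/ℚ)` in the integer matrices. -/
noncomputable def G₀ {K : Type*} [Field K] {n : ℕ}
    (b : Module.Basis (Fin n) ℤ (𝓞 K)) : Set (Matrix (Fin n) (Fin n) ℤ) :=
  {M | ∃ (u : (𝓞 K)ˣ) (σ : 𝓞 K ≃+* 𝓞 K), M = piRep b u σ}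

section AlmostMalnormalAux

open Matrix Polynomial IntermediateField

variable {K : Type*} [Field K] [NumberField K] {n : ℕ} (b : Module.Basis (Fin n) ℤ (𝓞 K))

noncomputable def mulσ (u : (𝓞 K)ˣ) (σ : 𝓞 K ≃+* 𝓞 K) : 𝓞 K →ₗ[ℤ] 𝓞 K where
  toFun := fun x => (u : 𝓞 K) * σ x
  map_add' := by intro x y; simp [map_add, mul_add]
  map_smul' := by intro m x; simp [map_zsmul, mul_smul_comm]; ring

lemma toLin_piRep (u : (𝓞 K)ˣ) (σ : 𝓞 K ≃+* 𝓞 K) :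
    Matrix.toLin b b (piRep b u σ)ᵀ = mulσ u σ := by
  apply b.ext
  intro i
  rw [Matrix.toLin_self]
  simp only [Matrix.transpose_apply, piRep, Matrix.of_apply, mulσ, LinearMap.coe_mk,
    AddHom.coe_mk]
  exact b.sum_repr _

lemma piRep_mul (u v : (𝓞 K)ˣ) (σ τ : 𝓞 K ≃+* 𝓞 K) :
    piRep b u σ * piRep b v τ = piRep b (v * Units.map (τ : 𝓞 K →* 𝓞 K) u) (σ.trans τ) := by
  ext i j
  simp only [Matrix.mul_apply, piRep, Matrix.of_apply]
  have h1 : ((v * Units.map (τ : 𝓞 K →* 𝓞 K) u : (𝓞 K)ˣ) : 𝓞 K) * (σ.trans τ) (b i)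
      = (v : 𝓞 K) * τ ((u : 𝓞 K) * σ (b i)) := by
    simp [Units.coe_map, RingEquiv.coe_trans, mul_assoc, _root_.map_mul]
  rw [h1]
  conv_rhs => rw [← Module.Basis.sum_repr b ((u : 𝓞 K) * σ (b i))]
  rw [map_sum, Finset.mul_sum, map_sum, Finsupp.finset_sum_apply]
  refine Finset.sum_congr rfl fun k _ => ?_
  rw [map_zsmul τ, mul_smul_comm, map_zsmul, Finsupp.smul_apply, smul_eq_mul, mul_comm]

lemma piRep_one : piRep b 1 (RingEquiv.refl _) = 1 := by
  ext i j
  simp [piRep, Matrix.one_apply, Module.Basis.repr_self, Finsupp.single_apply, eq_comm]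

lemma piRep_neg (u : (𝓞 K)ˣ) (σ : 𝓞 K ≃+* 𝓞 K) : piRep b (-u) σ = -piRep b u σ := by
  ext i j
  simp [piRep]

lemma piRep_injective {u v : (𝓞 K)ˣ} {σ τ : 𝓞 K ≃+* 𝓞 K}
    (h : piRep b u σ = piRep b v τ) : u = v ∧ σ = τ := by
  have key : ∀ x : 𝓞 K, (u : 𝓞 K) * σ x = (v : 𝓞 K) * τ x := by
    have h2 : mulσ u σ = mulσ (K := K) v τ := by
      rw [← toLin_piRep b u σ, ← toLin_piRep b v τ, h]
    intro x
    exact congrArg (fun f => f x) (congrArg DFunLike.coe h2)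
  have hu : (u : 𝓞 K) = (v : 𝓞 K) := by
    have := key 1
    simpa using this
  refine ⟨Units.ext hu, RingEquiv.ext fun x => ?_⟩
  have := key x
  rw [hu] at this
  exact mul_left_cancel₀ (Units.ne_zero v) this


lemma unit_not_mem_bot (u : (𝓞 K)ˣ) (h1 : (u : 𝓞 K) ≠ 1) (h2 : (u : 𝓞 K) ≠ -1) :
    (algebraMap (𝓞 K) K) (u : 𝓞 K) ∉ (⊥ : IntermediateField ℚ K) := by
  intro hmem
  rw [IntermediateField.mem_bot] at hmem
  obtain ⟨q, hq⟩ := hmem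
  have hqint : IsIntegral ℤ q := by
    rw [← isIntegral_algebraMap_iff (B := K) (algebraMap ℚ K).injective, hq]
    exact RingOfIntegers.isIntegral_coe _
  obtain ⟨m, hm⟩ := IsIntegrallyClosed.isIntegral_iff.mp hqint
  have hq0 : q ≠ 0 := by
    intro h0
    rw [h0, map_zero] at hq
    exact (RingOfIntegers.coe_ne_zero_iff.mpr (Units.ne_zero u)) hq.symm
  have hinv1 : (algebraMap (𝓞 K) K) ((u : 𝓞 K)) * (algebraMap (𝓞 K) K) ((u⁻¹ : (𝓞 K)ˣ) : 𝓞 K) = 1 := by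
    rw [← _root_.map_mul]
    simp
  have hqinv_eq : algebraMap ℚ K q⁻¹ = algebraMap (𝓞 K) K ((u⁻¹ : (𝓞 K)ˣ) : 𝓞 K) := by
    rw [map_inv₀, hq]
    exact inv_eq_of_mul_eq_one_right hinv1
  have hqinvint : IsIntegral ℤ q⁻¹ := by
    rw [← isIntegral_algebraMap_iff (B := K) (algebraMap ℚ K).injective, hqinv_eq]
    exact RingOfIntegers.isIntegral_coe _
  obtain ⟨m', hm'⟩ := IsIntegrallyClosed.isIntegral_iff.mp hqinvint
  have hmm' : m * m' = 1 := by
    have : algebraMap ℤ ℚ (m * m') = algebraMap ℤ ℚ 1 := by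
      rw [_root_.map_mul, hm, hm', _root_.map_one, mul_inv_cancel₀ hq0]
    exact (algebraMap ℤ ℚ).injective_int this
  rcases Int.isUnit_iff.mp (IsUnit.of_mul_eq_one _ hmm') with h | h
  · apply h1
    apply RingOfIntegers.coe_injective
    rw [← hq, ← hm, h]
    simp
  · apply h2
    apply RingOfIntegers.coe_injective
    rw [← hq, ← hm, h]
    simp

lemma part1 (hmin : ∀ F : IntermediateField ℚ K, F = ⊥ ∨ F = ⊤)
    (u w : (𝓞 K)ˣ) (hw1 : (w : 𝓞 K) ≠ 1) (hw2 : (w : 𝓞 K) ≠ -1)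
    (g : GL (Fin n) ℤ)
    (hconj : (g : Matrix (Fin n) (Fin n) ℤ) * piRep b u (RingEquiv.refl _) *
        ((g⁻¹ : GL (Fin n) ℤ) : Matrix (Fin n) (Fin n) ℤ) = piRep b w (RingEquiv.refl _)) :
    (g : Matrix (Fin n) (Fin n) ℤ) ∈ G₀ b := by
  classical
  set gm : Matrix (Fin n) (Fin n) ℤ := (g : Matrix (Fin n) (Fin n) ℤ) with hgm
  set gi : Matrix (Fin n) (Fin n) ℤ := ((g⁻¹ : GL (Fin n) ℤ) : Matrix (Fin n) (Fin n) ℤ) with hgi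
  have hggi : gm * gi = 1 := g.mul_inv
  have hgig : gi * gm = 1 := g.inv_mul
  -- step 1 : g π(u) = π(w) g
  have hmul : gm * piRep b u (RingEquiv.refl _) = piRep b w (RingEquiv.refl _) * gm := by
    have := congrArg (fun M => M * gm) hconj
    simpa [mul_assoc, hgig] using this
  -- step 2 : transpose
  have htr : (piRep b u (RingEquiv.refl _))ᵀ * gmᵀ = gmᵀ * (piRep b w (RingEquiv.refl _))ᵀ := by
    calc (piRep b u (RingEquiv.refl _))ᵀ * gmᵀ = (gm * piRep b u (RingEquiv.refl _))ᵀ := by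
          rw [Matrix.transpose_mul]
      _ = (piRep b w (RingEquiv.refl _) * gm)ᵀ := by rw [hmul]
      _ = gmᵀ * (piRep b w (RingEquiv.refl _))ᵀ := by rw [Matrix.transpose_mul]
  -- step 3 : the linear map φ
  set φ : 𝓞 K →ₗ[ℤ] 𝓞 K := Matrix.toLin b b gmᵀ with hφ
  set φi : 𝓞 K →ₗ[ℤ] 𝓞 K := Matrix.toLin b b giᵀ with hφi
  have hcomp1 : φ.comp φi = LinearMap.id := by
    rw [hφ, hφi, ← Matrix.toLin_mul, ← Matrix.transpose_mul, hgig]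
    simp
  have hcomp2 : φi.comp φ = LinearMap.id := by
    rw [hφ, hφi, ← Matrix.toLin_mul, ← Matrix.transpose_mul, hggi]
    simp
  set e : 𝓞 K ≃ₗ[ℤ] 𝓞 K := LinearEquiv.ofLinear φ φi hcomp1 hcomp2 with he
  -- step 4 : φ (w x) = u φ x
  have hφw : ∀ x : 𝓞 K, φ ((w : 𝓞 K) * x) = (u : 𝓞 K) * φ x := by
    intro x
    have h0 : Matrix.toLin b b ((piRep b u (RingEquiv.refl _))ᵀ * gmᵀ) =
        Matrix.toLin b b (gmᵀ * (piRep b w (RingEquiv.refl _))ᵀ) := by rw [htr]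
    rw [Matrix.toLin_mul b b b, Matrix.toLin_mul b b b, toLin_piRep, toLin_piRep] at h0
    have := congrArg (fun f => f x) (congrArg DFunLike.coe h0)
    simpa [mulσ] using this.symm
  -- step 5 : basis of K
  set bK : Module.Basis (Fin n) ℚ K := Module.Basis.localizationLocalization ℚ (nonZeroDivisors ℤ) K b with hbK
  have hbKa : ∀ i, bK i = algebraMap (𝓞 K) K (b i) := fun i =>
    Module.Basis.localizationLocalization_apply ℚ (nonZeroDivisors ℤ) K b i
  -- step 6 : the map Φ on K
  set Φ : K →ₗ[ℚ] K := Matrix.toLin bK bK (gmᵀ.map (Int.cast : ℤ → ℚ)) with hΦ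
  -- step 7 : Φ extends φ
  have hΦφ : ∀ x : 𝓞 K, Φ (algebraMap (𝓞 K) K x) = algebraMap (𝓞 K) K (φ x) := by
    have hmaps : (Φ.restrictScalars ℤ).comp
          ((IsScalarTower.toAlgHom ℤ (𝓞 K) K).toLinearMap) =
        ((IsScalarTower.toAlgHom ℤ (𝓞 K) K).toLinearMap).comp φ := by
      apply b.ext
      intro i
      simp only [LinearMap.coe_comp, Function.comp_apply, AlgHom.toLinearMap_apply,
        IsScalarTower.coe_toAlgHom', LinearMap.coe_restrictScalars]
      rw [← hbKa i, hΦ, Matrix.toLin_self, hφ, Matrix.toLin_self, map_sum]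
      refine Finset.sum_congr rfl fun k _ => ?_
      simp only [Matrix.map_apply, Matrix.transpose_apply, map_zsmul]
      rw [← hbKa k]
      rw [Int.cast_smul_eq_zsmul]
    intro x
    exact congrArg (fun f => f x) (congrArg DFunLike.coe hmaps)
  -- step 8 : Φ (w z) = u Φ z  on K
  set wK : K := algebraMap (𝓞 K) K (w : 𝓞 K) with hwK
  set uK : K := algebraMap (𝓞 K) K (u : 𝓞 K) with huK
  have hΦw : ∀ z : K, Φ (wK * z) = uK * Φ z := by
    have hmaps : Φ.comp ((LinearMap.mulLeft ℚ wK)) =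
        (LinearMap.mulLeft ℚ uK).comp Φ := by
      apply bK.ext
      intro i
      simp only [LinearMap.coe_comp, Function.comp_apply, LinearMap.mulLeft_apply]
      rw [hbKa i, hwK, ← _root_.map_mul, hΦφ, hΦφ, hφw, huK, _root_.map_mul]
    intro z
    exact congrArg (fun f => f z) (congrArg DFunLike.coe hmaps)
  -- step 9 : powers
  have hΦpow : ∀ k : ℕ, Φ (wK ^ k) = uK ^ k * Φ 1 := by
    intro k
    induction k with
    | zero => simp
    | succ k ih =>
      rw [pow_succ, mul_comm (wK ^ k) wK, hΦw, ih]
      ring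
  -- step 10 : polynomials
  have hΦaeval : ∀ p : ℚ[X], Φ (aeval wK p) = aeval uK p * Φ 1 := by
    intro p
    induction p using Polynomial.induction_on' with
    | add p q hp hq => rw [map_add, map_add, map_add, add_mul, hp, hq]
    | monomial k a =>
      rw [aeval_monomial, aeval_monomial, ← Algebra.smul_def, LinearMap.map_smul, hΦpow,
        Algebra.smul_def, mul_assoc]
  -- step 11
  have he1 : ∀ x, e x = φ x := fun x => rfl
  have hφ1 : φ 1 ≠ 0 := by
    intro h
    have h2 : e 1 = e 0 := by rw [he1, he1, h, map_zero]
    exact one_ne_zero (e.injective h2)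
  have hΦ1eq : Φ 1 = algebraMap (𝓞 K) K (φ 1) := by
    have := hΦφ 1
    rwa [_root_.map_one] at this
  have hΦ1 : Φ 1 ≠ 0 := by
    rw [hΦ1eq]
    exact RingOfIntegers.coe_ne_zero_iff.mpr hφ1
  -- step 12
  have hwbot := unit_not_mem_bot w hw1 hw2
  have hF : (ℚ⟮wK⟯ : IntermediateField ℚ K) = ⊤ := by
    rcases hmin ℚ⟮wK⟯ with h | h
    · exfalso
      apply hwbot
      rw [← h]
      exact IntermediateField.mem_adjoin_simple_self ℚ wK
    · exact h
  have hwint : IsIntegral ℚ wK := IsIntegral.of_finite ℚ wK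
  -- step 14
  have hroot : (Polynomial.aeval uK) (minpoly ℚ wK) = 0 := by
    have h0 := hΦaeval (minpoly ℚ wK)
    rw [minpoly.aeval, map_zero] at h0
    rcases mul_eq_zero.mp h0.symm with h | h
    · exact h
    · exact absurd h hΦ1
  -- step 15
  set pb : PowerBasis ℚ K := (IntermediateField.adjoin.powerBasis hwint).map
      ((IntermediateField.equivOfEq hF).trans IntermediateField.topEquiv) with hpb
  have hgen : pb.gen = wK := by
    simp [hpb, IntermediateField.adjoin.powerBasis_gen]
  -- step 16
  set σA : K →ₐ[ℚ] K := pb.lift uK (by rw [hgen]; exact hroot) with hσA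
  have hσAw : σA wK = uK := by
    rw [← hgen, hσA]
    exact pb.lift_gen _ _
  -- step 17
  have halg : Algebra.IsAlgebraic ℚ K := Algebra.IsAlgebraic.of_finite ℚ K
  have hbij : Function.Bijective σA := Algebra.IsAlgebraic.algHom_bijective σA
  set σE : K ≃ₐ[ℚ] K := AlgEquiv.ofBijective σA hbij with hσE
  have hσEc : ∀ z, σE z = σA z := fun z => rfl
  -- step 18
  set σB : 𝓞 K ≃ₐ[ℤ] 𝓞 K := galRestrict ℤ ℚ K (𝓞 K) σE with hσB
  have hσBc : ∀ x : 𝓞 K, algebraMap (𝓞 K) K (σB x) = σE (algebraMap (𝓞 K) K x) :=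
    fun x => algebraMap_galRestrict_apply ℤ σE x
  -- step 19
  have hΦσ : ∀ z : K, Φ z = σE z * Φ 1 := by
    intro z
    have hztop : z ∈ (⊤ : IntermediateField ℚ K) := IntermediateField.mem_top
    rw [← hF] at hztop
    have hz2 : z ∈ Algebra.adjoin ℚ ({wK} : Set K) := by
      rw [← IntermediateField.adjoin_simple_toSubalgebra_of_isAlgebraic hwint.isAlgebraic]
      exact hztop
    rw [Algebra.adjoin_singleton_eq_range_aeval, AlgHom.mem_range] at hz2
    obtain ⟨p, hp⟩ := hz2
    rw [← hp, hΦaeval]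
    congr 1
    rw [hσEc, ← Polynomial.aeval_algHom_apply, hσAw]
  -- step 20
  have hφσ : ∀ x : 𝓞 K, φ x = φ 1 * σB x := by
    intro x
    apply RingOfIntegers.coe_injective
    rw [_root_.map_mul, ← hΦφ x, hΦσ, hσBc, hΦ1eq]
    ring
  -- step 21
  have hy : φ (e.symm 1) = 1 := by
    rw [← he1]
    exact e.apply_symm_apply 1
  have hunit : φ 1 * σB (e.symm 1) = 1 := by
    rw [← hφσ]
    exact hy
  refine ⟨⟨φ 1, σB (e.symm 1), hunit, by rw [mul_comm]; exact hunit⟩, σB.toRingEquiv, ?_⟩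
  ext i j
  show gm i j = piRep b _ σB.toRingEquiv i j
  simp only [piRep, Matrix.of_apply]
  have h1 : (⟨φ 1, σB (e.symm 1), hunit, by rw [mul_comm]; exact hunit⟩ : (𝓞 K)ˣ).val *
      σB.toRingEquiv (b i) = φ (b i) := (hφσ (b i)).symm
  rw [h1, hφ, Matrix.toLin_self]
  rw [map_sum, Finsupp.finset_sum_apply]
  simp [Module.Basis.repr_self, Finsupp.single_apply, Matrix.transpose_apply]
  simp [← zsmul_eq_mul, Module.Basis.repr_self, Finsupp.single_apply]


lemma piRep_inv_right (v : (𝓞 K)ˣ) (σ : 𝓞 K ≃+* 𝓞 K) :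
    piRep b v σ * piRep b (Units.map (σ.symm : 𝓞 K →* 𝓞 K) v)⁻¹ σ.symm = 1 := by
  rw [piRep_mul]
  have h1 : (Units.map (σ.symm : 𝓞 K →* 𝓞 K) v)⁻¹ *
      Units.map (σ.symm : 𝓞 K →* 𝓞 K) v = 1 := inv_mul_cancel _
  rw [h1, RingEquiv.self_trans_symm, piRep_one]

lemma piRep_inv_left (v : (𝓞 K)ˣ) (σ : 𝓞 K ≃+* 𝓞 K) :
    piRep b (Units.map (σ.symm : 𝓞 K →* 𝓞 K) v)⁻¹ σ.symm * piRep b v σ = 1 := by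
  rw [piRep_mul]
  have h1 : v * Units.map (σ : 𝓞 K →* 𝓞 K) (Units.map (σ.symm : 𝓞 K →* 𝓞 K) v)⁻¹ = 1 := by
    rw [map_inv]
    have : Units.map (σ : 𝓞 K →* 𝓞 K) (Units.map (σ.symm : 𝓞 K →* 𝓞 K) v) = v := by
      ext
      simp [Units.coe_map]
    rw [this, mul_inv_cancel]
  rw [h1, RingEquiv.symm_trans_self, piRep_one]

lemma finiteAut : Finite (𝓞 K ≃+* 𝓞 K) := by
  have hcomm : ∀ (σ : 𝓞 K ≃+* 𝓞 K) (m : ℤ),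
      σ (algebraMap ℤ (𝓞 K) m) = algebraMap ℤ (𝓞 K) m := by
    intro σ m
    have h : (σ : 𝓞 K →+* 𝓞 K).comp (algebraMap ℤ (𝓞 K)) = algebraMap ℤ (𝓞 K) :=
      Subsingleton.elim _ _
    exact congrArg (fun f => f m) (congrArg DFunLike.coe h)
  let j : (𝓞 K ≃+* 𝓞 K) → (K ≃ₐ[ℚ] K) := fun σ =>
    (galRestrict ℤ ℚ K (𝓞 K)).symm (AlgEquiv.ofRingEquiv (f := σ) (hcomm σ))
  have hj : Function.Injective j := by
    intro σ τ h
    have h2 := (galRestrict ℤ ℚ K (𝓞 K)).symm.injective h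
    refine RingEquiv.ext fun x => ?_
    exact congrArg (fun (E : 𝓞 K ≃ₐ[ℤ] 𝓞 K) => E x) h2
  exact Finite.of_injective j hj

lemma part2 (hmin : ∀ F : IntermediateField ℚ K, F = ⊥ ∨ F = ⊤)
    (g : GL (Fin n) ℤ) (hg : (g : Matrix (Fin n) (Fin n) ℤ) ∉ G₀ b) :
    {M | M ∈ G₀ b ∧
      (g : Matrix (Fin n) (Fin n) ℤ) * M *
        ((g⁻¹ : GL (Fin n) ℤ) : Matrix (Fin n) (Fin n) ℤ) ∈ G₀ b}.Finite := by
  classical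
  set gm : Matrix (Fin n) (Fin n) ℤ := (g : Matrix (Fin n) (Fin n) ℤ) with hgm
  set gi : Matrix (Fin n) (Fin n) ℤ := ((g⁻¹ : GL (Fin n) ℤ) : Matrix (Fin n) (Fin n) ℤ) with hgi
  have hggi : gm * gi = 1 := g.mul_inv
  have hgig : gi * gm = 1 := g.inv_mul
  set S : Set (Matrix (Fin n) (Fin n) ℤ) := {M | M ∈ G₀ b ∧ gm * M * gi ∈ G₀ b} with hS
  set fu : Matrix (Fin n) (Fin n) ℤ → (𝓞 K)ˣ := fun M =>
    if h : M ∈ G₀ b then h.choose else 1 with hfu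
  set fσ : Matrix (Fin n) (Fin n) ℤ → (𝓞 K ≃+* 𝓞 K) := fun M =>
    if h : M ∈ G₀ b then h.choose_spec.choose else RingEquiv.refl _ with hfσ
  have hf : ∀ M, M ∈ G₀ b → M = piRep b (fu M) (fσ M) := by
    intro M h
    simp only [hfu, hfσ, dif_pos h]
    exact h.choose_spec.choose_spec
  have hpair : ∀ M₁ ∈ S, ∀ M₂ ∈ S, fσ M₁ = fσ M₂ →
      fσ (gm * M₁ * gi) = fσ (gm * M₂ * gi) → M₁ = M₂ ∨ M₁ = -M₂ := by
    intro M₁ hM₁ M₂ hM₂ hσeq hσeq'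
    obtain ⟨hM₁G, hM₁G'⟩ := hM₁
    obtain ⟨hM₂G, hM₂G'⟩ := hM₂
    set v₁ := fu M₁; set σ₁ := fσ M₁
    set v₂ := fu M₂; set σ₂ := fσ M₂
    set v₁' := fu (gm * M₁ * gi); set σ₁' := fσ (gm * M₁ * gi)
    set v₂' := fu (gm * M₂ * gi); set σ₂' := fσ (gm * M₂ * gi)
    have e₁ : M₁ = piRep b v₁ σ₁ := hf _ hM₁G
    have e₂ : M₂ = piRep b v₂ σ₂ := hf _ hM₂G
    have e₁' : gm * M₁ * gi = piRep b v₁' σ₁' := hf _ hM₁G'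
    have e₂' : gm * M₂ * gi = piRep b v₂' σ₂' := hf _ hM₂G'
    set z₂ : (𝓞 K)ˣ := (Units.map (σ₂.symm : 𝓞 K →* 𝓞 K) v₂)⁻¹ with hz₂
    set N₂ := piRep b z₂ σ₂.symm with hN₂
    have hMN : M₂ * N₂ = 1 := by rw [e₂, hN₂]; exact piRep_inv_right b v₂ σ₂
    have hNM : N₂ * M₂ = 1 := by rw [e₂, hN₂]; exact piRep_inv_left b v₂ σ₂
    set z₂' : (𝓞 K)ˣ := (Units.map (σ₂'.symm : 𝓞 K →* 𝓞 K) v₂')⁻¹ with hz₂'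
    set N₂' := piRep b z₂' σ₂'.symm with hN₂'
    have hMN' : (gm * M₂ * gi) * N₂' = 1 := by rw [e₂', hN₂']; exact piRep_inv_right b v₂' σ₂'
    have hNM' : N₂' * (gm * M₂ * gi) = 1 := by rw [e₂', hN₂']; exact piRep_inv_left b v₂' σ₂'
    -- g N₂ g⁻¹ = N₂'
    have hconjN : gm * N₂ * gi = N₂' := by
      have h1 : (gm * M₂ * gi) * (gm * N₂ * gi) = 1 := by
        calc (gm * M₂ * gi) * (gm * N₂ * gi) = gm * M₂ * (gi * gm) * N₂ * gi := by noncomm_ring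
          _ = gm * (M₂ * N₂) * gi := by rw [hgig]; noncomm_ring
          _ = 1 := by rw [hMN, mul_one, hggi]
      calc gm * N₂ * gi = N₂' * ((gm * M₂ * gi) * (gm * N₂ * gi)) := by
            rw [← mul_assoc, hNM', one_mul]
        _ = N₂' := by rw [h1, mul_one]
    -- the products
    have hP : M₁ * N₂ = piRep b (z₂ * Units.map (σ₂.symm : 𝓞 K →* 𝓞 K) v₁)
        (RingEquiv.refl _) := by
      rw [e₁, hN₂, piRep_mul, hσeq, RingEquiv.self_trans_symm]
    have hP' : (gm * M₁ * gi) * N₂' = piRep b (z₂' * Units.map (σ₂'.symm : 𝓞 K →* 𝓞 K) v₁')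
        (RingEquiv.refl _) := by
      rw [e₁', hN₂', piRep_mul, hσeq', RingEquiv.self_trans_symm]
    set t : (𝓞 K)ˣ := z₂ * Units.map (σ₂.symm : 𝓞 K →* 𝓞 K) v₁ with ht
    set s : (𝓞 K)ˣ := z₂' * Units.map (σ₂'.symm : 𝓞 K →* 𝓞 K) v₁' with hs
    have hconjP : gm * (M₁ * N₂) * gi = piRep b s (RingEquiv.refl _) := by
      calc gm * (M₁ * N₂) * gi = (gm * M₁ * gi) * (gm * N₂ * gi) := by
            rw [show (gm * M₁ * gi) * (gm * N₂ * gi) = gm * M₁ * (gi * gm) * N₂ * gi by noncomm_ring,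
              hgig]
            noncomm_ring
        _ = (gm * M₁ * gi) * N₂' := by rw [hconjN]
        _ = piRep b s (RingEquiv.refl _) := hP'
    by_cases ht1 : (t : 𝓞 K) = 1
    · left
      have : M₁ * N₂ = 1 := by
        rw [hP, show t = 1 from Units.ext ht1, piRep_one]
      calc M₁ = M₁ * (N₂ * M₂) := by rw [hNM, mul_one]
        _ = (M₁ * N₂) * M₂ := by rw [mul_assoc]
        _ = M₂ := by rw [this, one_mul]
    by_cases ht2 : (t : 𝓞 K) = -1
    · right
      have : M₁ * N₂ = -1 := by
        rw [hP, show t = -1 from Units.ext (by rw [ht2]; rfl), piRep_neg, piRep_one]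
      calc M₁ = M₁ * (N₂ * M₂) := by rw [hNM, mul_one]
        _ = (M₁ * N₂) * M₂ := by rw [mul_assoc]
        _ = -M₂ := by rw [this]; noncomm_ring
    · exfalso
      have hs1 : (s : 𝓞 K) ≠ 1 := by
        intro h
        apply ht1
        have h1 : piRep b s (RingEquiv.refl _) = 1 := by
          rw [show s = 1 from Units.ext h, piRep_one]
        have h2 : M₁ * N₂ = 1 := by
          calc M₁ * N₂ = (gi * gm) * (M₁ * N₂) * (gi * gm) := by rw [hgig]; noncomm_ring
            _ = gi * (gm * (M₁ * N₂) * gi) * gm := by noncomm_ring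
            _ = 1 := by rw [hconjP, h1, mul_one, hgig]
        have h3 : piRep b t (RingEquiv.refl _) = piRep b 1 (RingEquiv.refl _) :=
          (hP.symm.trans h2).trans (piRep_one b).symm
        exact congrArg Units.val (piRep_injective b h3).1
      have hs2 : (s : 𝓞 K) ≠ -1 := by
        intro h
        apply ht2
        have h1 : piRep b s (RingEquiv.refl _) = -1 := by
          rw [show s = -1 from Units.ext (by rw [h]; rfl), piRep_neg, piRep_one]
        have h2 : M₁ * N₂ = -1 := by
          calc M₁ * N₂ = (gi * gm) * (M₁ * N₂) * (gi * gm) := by rw [hgig]; noncomm_ring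
            _ = gi * (gm * (M₁ * N₂) * gi) * gm := by noncomm_ring
            _ = gi * (-1) * gm := by rw [hconjP, h1]
            _ = -(gi * gm) := by noncomm_ring
            _ = -1 := by rw [hgig]
        have h4 : piRep b (-1) (RingEquiv.refl (𝓞 K)) = -1 := by
          rw [piRep_neg, piRep_one]
        have h3 : piRep b t (RingEquiv.refl _) = piRep b (-1) (RingEquiv.refl _) :=
          (hP.symm.trans h2).trans h4.symm
        have := congrArg Units.val (piRep_injective b h3).1
        rw [this]
        rfl
      apply hg
      apply part1 b hmin t s hs1 hs2 g
      show gm * piRep b t (RingEquiv.refl _) * gi = piRep b s (RingEquiv.refl _)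
      rw [← hP]
      exact hconjP
  have hfin : ∀ p : (𝓞 K ≃+* 𝓞 K) × (𝓞 K ≃+* 𝓞 K),
      {M | M ∈ S ∧ (fσ M, fσ (gm * M * gi)) = p}.Finite := by
    intro p
    rcases Set.eq_empty_or_nonempty
      {M | M ∈ S ∧ (fσ M, fσ (gm * M * gi)) = p} with h | ⟨M₀, hM₀⟩
    · rw [h]; exact Set.finite_empty
    · apply Set.Finite.subset ((Set.finite_singleton M₀).insert (-M₀))
      intro M hM
      have hcc := hM.2.trans hM₀.2.symm
      rcases hpair M hM.1 M₀ hM₀.1 (congrArg Prod.fst hcc) (congrArg Prod.snd hcc) with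
        h | h
      · rw [h]
        right
        exact Set.mem_singleton M₀
      · rw [h]
        left
        rfl
  have hFin : Finite ((𝓞 K ≃+* 𝓞 K) × (𝓞 K ≃+* 𝓞 K)) := by
    have := finiteAut (K := K)
    infer_instance
  have hSsub : S ⊆ ⋃ p, {M | M ∈ S ∧ (fσ M, fσ (gm * M * gi)) = p} := fun M hM =>
    Set.mem_iUnion.mpr ⟨(fσ M, fσ (gm * M * gi)), hM, rfl⟩
  exact Set.Finite.subset (Set.finite_iUnion hfin) hSsub


end AlmostMalnormalAux

/-- Let `K` be a degree-`n` number field with no intermediate fields strictly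
between `ℚ` and `K`. If `u, w` are units of `𝓞 K` different from `±1` and
`g ∈ GL(n,ℤ)` conjugates `π(u)` to `π(w)`, then `g ∈ G₀`. Consequently
`g G₀ g⁻¹ ∩ G₀` is finite for every `g ∈ GL(n,ℤ) \ G₀`. -/
theorem almost_malnormal_number_field {K : Type*} [Field K] [NumberField K]
    {n : ℕ} (hn : 0 < n) (hrank : Module.finrank ℚ K = n)
    (hmin : ∀ F : IntermediateField ℚ K, F = ⊥ ∨ F = ⊤)
    (b : Module.Basis (Fin n) ℤ (𝓞 K)) (hb0 : b ⟨0, hn⟩ = 1) :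
    (∀ (u w : (𝓞 K)ˣ), (u : 𝓞 K) ≠ 1 → (u : 𝓞 K) ≠ -1 →
      (w : 𝓞 K) ≠ 1 → (w : 𝓞 K) ≠ -1 →
      ∀ g : GL (Fin n) ℤ,
        (g : Matrix (Fin n) (Fin n) ℤ) * piRep b u (RingEquiv.refl _) *
            ((g⁻¹ : GL (Fin n) ℤ) : Matrix (Fin n) (Fin n) ℤ) =
          piRep b w (RingEquiv.refl _) →
        (g : Matrix (Fin n) (Fin n) ℤ) ∈ G₀ b) ∧
    (∀ g : GL (Fin n) ℤ, (g : Matrix (Fin n) (Fin n) ℤ) ∉ G₀ b →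
      {M | M ∈ G₀ b ∧
        (g : Matrix (Fin n) (Fin n) ℤ) * M *
          ((g⁻¹ : GL (Fin n) ℤ) : Matrix (Fin n) (Fin n) ℤ) ∈ G₀ b}.Finite) := by
  constructor
  · intro u w hu1 hu2 hw1 hw2 g hconj
    exact part1 b hmin u w hw1 hw2 g hconj
  · intro g hg
    exact part2 b hmin g hg
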